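/- Let ρ > 0, ν ∈ ℝ with cos(πν) ≠ 0, and let r' ∈ EuclideanSpace ℝ (Fin 3) be nonzero. Set a = −(ρ²/‖r'‖²)·r' and I_a(r) = ((ρ² + ‖a‖²)/‖r − a‖²)·(r − a) + a. Then for every r with r ≠ a and r ≠ r', G_ν(r, r') = (ρ²/‖r'‖) · ‖r − a‖^{−1} · g₀(‖I_a(r)‖), where g₀(s) = −(√(s² + ρ²)/(4π cos(πν) s ρ)) · sin((ν + 1/2) · arccos((s² − ρ²)/(s² + ρ²))) is the Green's function for a source at the origin. -/

import Mathlib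

/-- The three-dimensional Maxwell fish-eye Green's function. -/
noncomputable def fisheyeGreen (ρ ν : ℝ) (r r' : EuclideanSpace ℝ (Fin 3)) : ℝ :=
  -(1 / (4 * Real.pi * Real.cos (Real.pi * ν)))
    * (Real.sqrt ((‖r‖ ^ 2 + ρ ^ 2) * (‖r'‖ ^ 2 + ρ ^ 2))
        / (‖r - r'‖
            * Real.sqrt (‖r‖ ^ 2 * ‖r'‖ ^ 2 + 2 * ρ ^ 2 * (inner ℝ r r' : ℝ) + ρ ^ 4)))
    * Real.sin ((ν + 1 / 2)
        * Real.arccos (-1 + 2 * ρ ^ 2 * ‖r - r'‖ ^ 2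
            / ((‖r‖ ^ 2 + ρ ^ 2) * (‖r'‖ ^ 2 + ρ ^ 2))))

theorem fisheye_green_from_inversion_of_central_green
    (ρ ν : ℝ) (hρ : 0 < ρ) (hν : Real.cos (Real.pi * ν) ≠ 0)
    (r' : EuclideanSpace ℝ (Fin 3)) (hr' : r' ≠ 0)
    (a : EuclideanSpace ℝ (Fin 3)) (ha : a = -(ρ ^ 2 / ‖r'‖ ^ 2) • r')
    (Ia : EuclideanSpace ℝ (Fin 3) → EuclideanSpace ℝ (Fin 3))
    (hIa : Ia = fun r => ((ρ ^ 2 + ‖a‖ ^ 2) / ‖r - a‖ ^ 2) • (r - a) + a)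
    (g₀ : ℝ → ℝ)
    (hg₀ : g₀ = fun s =>
      -(Real.sqrt (s ^ 2 + ρ ^ 2) / (4 * Real.pi * Real.cos (Real.pi * ν) * s * ρ))
        * Real.sin ((ν + 1 / 2) * Real.arccos ((s ^ 2 - ρ ^ 2) / (s ^ 2 + ρ ^ 2)))) :
    ∀ r : EuclideanSpace ℝ (Fin 3), r ≠ a → r ≠ r' →
      fisheyeGreen ρ ν r r' = (ρ ^ 2 / ‖r'‖) * ‖r - a‖⁻¹ * g₀ ‖Ia r‖ := by
  intro r hra hrr'
  have hπ : Real.pi ≠ 0 := Real.pi_ne_zero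
  have hn'0 : (0:ℝ) < ‖r'‖ := norm_pos_iff.mpr hr'
  have hd0 : (0:ℝ) < ‖r - r'‖ := by rw [norm_pos_iff, sub_ne_zero]; exact hrr'
  have hra0 : (0:ℝ) < ‖r - a‖ := by rw [norm_pos_iff, sub_ne_zero]; exact hra
  set t : ℝ := (inner ℝ r r' : ℝ) with ht
  have hiRA : (inner ℝ r a : ℝ) = -(ρ^2/‖r'‖^2) * t := by
    rw [ha, real_inner_smul_right, ← ht]
  have hA2 : ‖a‖^2 = ρ^4/‖r'‖^2 := by
    rw [ha, norm_smul, mul_pow, Real.norm_eq_abs, sq_abs]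
    field_simp [hn'0.ne']
  have hd2 : ‖r - r'‖^2 = ‖r‖^2 - 2*t + ‖r'‖^2 := by
    rw [norm_sub_sq_real, ← ht]
  have hw : ‖r - a‖^2 = (‖r‖^2*‖r'‖^2 + 2*ρ^2*t + ρ^4)/‖r'‖^2 := by
    rw [norm_sub_sq_real, hiRA, hA2]
    field_simp [hn'0.ne']
    ring
  have hDpos : (0:ℝ) < ‖r‖^2*‖r'‖^2 + 2*ρ^2*t + ρ^4 := by
    have hD' : ‖r‖^2*‖r'‖^2 + 2*ρ^2*t + ρ^4 = ‖r - a‖^2 * ‖r'‖^2 := by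
      rw [hw]; field_simp [hn'0.ne']
    rw [hD']; positivity
  have hPpos : (0:ℝ) < (‖r‖^2 + ρ^2) * (‖r'‖^2 + ρ^2) := by positivity
  have hsD : (0:ℝ) < Real.sqrt (‖r‖^2*‖r'‖^2 + 2*ρ^2*t + ρ^4) :=
    Real.sqrt_pos.mpr hDpos
  have hra' : ‖r - a‖ = Real.sqrt (‖r‖^2*‖r'‖^2 + 2*ρ^2*t + ρ^4) / ‖r'‖ := by
    rw [show ‖r - a‖ = Real.sqrt (‖r - a‖^2) from (Real.sqrt_sq hra0.le).symm, hw,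
      Real.sqrt_div (by positivity), Real.sqrt_sq hn'0.le]
  have hs2 : ‖Ia r‖^2 = ρ^4 * ‖r - r'‖^2 / (‖r‖^2*‖r'‖^2 + 2*ρ^2*t + ρ^4) := by
    rw [hIa]
    simp only
    rw [norm_add_sq_real, norm_smul, mul_pow, Real.norm_eq_abs, sq_abs, real_inner_smul_left,
      inner_sub_left, real_inner_self_eq_norm_sq, hiRA, hA2, hw, hd2]
    field_simp [hn'0.ne', hDpos.ne']
    rw [div_add_one (show ‖r'‖^2*‖r‖^2 + ρ^2*2*t + ρ^4 ≠ 0 by nlinarith [hDpos])]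
    congr 1
    ring
  have hs : ‖Ia r‖ = ρ^2 * ‖r - r'‖ / Real.sqrt (‖r‖^2*‖r'‖^2 + 2*ρ^2*t + ρ^4) := by
    rw [show ‖Ia r‖ = Real.sqrt (‖Ia r‖^2) from (Real.sqrt_sq (norm_nonneg _)).symm, hs2,
      Real.sqrt_div (by positivity),
      show ρ^4 * ‖r - r'‖^2 = (ρ^2 * ‖r - r'‖)^2 by ring, Real.sqrt_sq (by positivity)]
  have hs2p : ‖Ia r‖^2 + ρ^2
      = ρ^2 * ((‖r‖^2 + ρ^2) * (‖r'‖^2 + ρ^2)) / (‖r‖^2*‖r'‖^2 + 2*ρ^2*t + ρ^4) := by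
    rw [hs2, hd2, div_add' (hc := hDpos.ne')]
    congr 1
    ring
  have hsq : Real.sqrt (‖Ia r‖^2 + ρ^2)
      = ρ * Real.sqrt ((‖r‖^2 + ρ^2) * (‖r'‖^2 + ρ^2))
        / Real.sqrt (‖r‖^2*‖r'‖^2 + 2*ρ^2*t + ρ^4) := by
    rw [hs2p, Real.sqrt_div (by positivity), Real.sqrt_mul (sq_nonneg ρ), Real.sqrt_sq hρ.le]
  have hX : (‖Ia r‖^2 - ρ^2)/(‖Ia r‖^2 + ρ^2)
      = -1 + 2*ρ^2*‖r - r'‖^2 / ((‖r‖^2 + ρ^2) * (‖r'‖^2 + ρ^2)) := by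
    rw [hs2p, hs2, hd2]
    rw [div_sub' (hc := hDpos.ne'), div_div_div_cancel_right₀ (hc := hDpos.ne')]
    field_simp [hDpos.ne', hPpos.ne', hρ.ne']
    ring
  rw [fisheyeGreen, hg₀]
  simp only
  rw [← ht, hX, hsq, hs, hra']
  field_simp [hν, hπ, hn'0.ne', hρ.ne', hd0.ne', hsD.ne']
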